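/- For odd n ≥ 3, the function F_n(h) := Σ_{k=0}^{h} ((C(n,k) - C(n,k-1))/C(n,h)) · ((n-k-h)/(n-2k)) is strictly decreasing in h on {0, 1, …, (n-1)/2}. -/

import Mathlib

/-- Binomial coefficient `C(n, j)` with integer lower index, with the
convention `C(n, j) = 0` for `j < 0`, valued in `ℚ`. -/
def ch (n : ℕ) (j : ℤ) : ℚ := if j < 0 then 0 else (n.choose j.toNat : ℚ)

/-- The optimal fidelity of `n`-qubit quantum majority vote on inputs of
Hamming weight `h`. -/
def Fid (n h : ℕ) : ℚ :=
  ∑ k ∈ Finset.range (h + 1),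
    ((ch n k - ch n ((k : ℤ) - 1)) / (n.choose h : ℚ))
      * (((n : ℚ) - k - h) / ((n : ℚ) - 2 * k))

/-- Auxiliary sum arising from Abel summation of `Fid`. -/
def Tq (n h : ℕ) : ℚ :=
  ∑ k ∈ Finset.range h, (n.choose k : ℚ) / (((n : ℚ) - 2 * k) * ((n : ℚ) - 2 * k - 2))

/-- The upper bound for `Tq`. -/
def Ufun (n h : ℕ) : ℚ :=
  ((h : ℚ) + 1) * (n.choose h : ℚ) /
    (((n : ℚ) - 2 * h) * (((n : ℚ) - 2 * h) ^ 2 - ((n : ℚ) - 2 * h) + 2 * h + 2))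

lemma ch_natCast (n k : ℕ) : ch n (k : ℤ) = (n.choose k : ℚ) := by
  simp [ch]

lemma Dnn (x N : ℚ) (hx : 0 ≤ x) (hN : 4 < N) :
    0 ≤ N^4 + 3*N^3 - 6*N^2 + 5*x*N^3 - 3*x*N^2 - 6*x*N + 4*x^2*N^2 - 6*x^2*N := by
  have p1 : (0:ℚ) < N^4 + 3*N^3 - 6*N^2 := by nlinarith
  have p2 : (0:ℚ) ≤ x * (5*N^3 - 3*N^2 - 6*N) := mul_nonneg hx (by nlinarith)
  have p3 : (0:ℚ) ≤ x^2 * (4*N^2 - 6*N) := mul_nonneg (sq_nonneg x) (by nlinarith)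
  nlinarith [p1, p2, p3]

/-- Key induction step inequality for the `Tq` bound. -/
lemma step_ineq (x N C C' : ℚ) (hx : 0 ≤ x) (hN : 4 < N) (hC : 0 < C)
    (hC' : C' * (x + 1) = C * (N + x)) :
    (x+1)*C/(N*(N^2-N+2*x+2)) + C/(N*(N-2))
      ≤ (x+2)*C'/((N-2)*((N-2)^2-(N-2)+2*(x+1)+2)) := by
  have hN0 : (0:ℚ) < N := by linarith
  have hN2 : (0:ℚ) < N - 2 := by linarith
  have hA : (0:ℚ) < N^2 - N + 2*x + 2 := by nlinarith
  have hB : (0:ℚ) < (N-2)^2 - (N-2) + 2*(x+1) + 2 := by nlinarith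
  have hx1 : (0:ℚ) < x + 1 := by linarith
  have hC'v : C' = C * (N + x) / (x + 1) := by
    rw [eq_div_iff hx1.ne']; exact hC'
  rw [hC'v, ← sub_nonneg]
  have hid : (x+2)*(C*(N+x)/(x+1))/((N-2)*((N-2)^2-(N-2)+2*(x+1)+2))
      - ((x+1)*C/(N*(N^2-N+2*x+2)) + C/(N*(N-2)))
      = C * (N^4 + 3*N^3 - 6*N^2 + 5*x*N^3 - 3*x*N^2 - 6*x*N + 4*x^2*N^2 - 6*x^2*N)
        / ((x+1) * (N * (N-2) * (N^2-N+2*x+2) * ((N-2)^2-(N-2)+2*(x+1)+2))) := by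
    rw [mul_div_assoc', div_div, div_add_div _ _ (by positivity) (mul_ne_zero hN0.ne' hN2.ne'),
      div_sub_div _ _ (by positivity) (by positivity), div_eq_div_iff (by positivity) (by positivity)]
    ring
  rw [hid]
  exact div_nonneg (mul_nonneg hC.le (Dnn x N hx hN)) (by positivity)

lemma T_lt_U (n h : ℕ) (hh : 2*h + 2 < n) : Tq n h < Ufun n h := by
  induction h with
  | zero =>
    have hn2 : (2:ℚ) < (n:ℚ) := by exact_mod_cast (by omega : 2 < n)
    have : Tq n 0 = 0 := by simp [Tq]
    rw [this]
    unfold Ufun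
    apply div_pos
    · push_cast; norm_num
    · push_cast
      nlinarith
  | succ h IH =>
    have hh' : 2*h + 2 < n := by omega
    have hhn : h ≤ n := by omega
    have IH' := IH hh'
    have hNgt : (4:ℚ) < (n:ℚ) - 2*h := by
      have h5 : ((2*h + 5 : ℕ) : ℚ) ≤ ((n : ℕ) : ℚ) := by exact_mod_cast (by omega : 2*h+5 ≤ n)
      push_cast at h5
      linarith
    have hC : (0:ℚ) < (n.choose h : ℚ) := by exact_mod_cast Nat.choose_pos hhn
    have hC' : (n.choose (h+1) : ℚ) * ((h:ℚ) + 1) = (n.choose h : ℚ) * (((n:ℚ) - 2*h) + h) := by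
      have hnat := Nat.choose_succ_right_eq n h
      have hcast := congrArg (fun t : ℕ => (t : ℚ)) hnat
      push_cast [Nat.cast_sub hhn] at hcast
      linear_combination hcast
    have hstep := step_ineq (h:ℚ) ((n:ℚ) - 2*h) (n.choose h : ℚ) (n.choose (h+1) : ℚ)
      (by positivity) hNgt hC hC'
    have hTsucc : Tq n (h+1) = Tq n h
        + (n.choose h : ℚ) / (((n:ℚ) - 2*h) * ((n:ℚ) - 2*h - 2)) := by
      unfold Tq
      rw [Finset.sum_range_succ]
    have e1 : Ufun n h = ((h:ℚ)+1)*(n.choose h : ℚ)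
        / (((n:ℚ)-2*h)*(((n:ℚ)-2*h)^2-((n:ℚ)-2*h)+2*(h:ℚ)+2)) := rfl
    have e2 : Ufun n (h+1) = ((h:ℚ)+2)*(n.choose (h+1) : ℚ)
        / ((((n:ℚ)-2*h)-2)*((((n:ℚ)-2*h)-2)^2-(((n:ℚ)-2*h)-2)+2*((h:ℚ)+1)+2)) := by
      unfold Ufun; push_cast; ring
    rw [hTsucc, e2]
    calc Tq n h + (n.choose h : ℚ) / (((n:ℚ) - 2*h) * ((n:ℚ) - 2*h - 2))
        < Ufun n h + (n.choose h : ℚ) / (((n:ℚ) - 2*h) * ((n:ℚ) - 2*h - 2)) := by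
          linarith
      _ ≤ _ := by
          rw [e1]
          have erw : (n.choose h : ℚ) / (((n:ℚ) - 2*h) * ((n:ℚ) - 2*h - 2))
              = (n.choose h : ℚ) / (((n:ℚ) - 2*h) * (((n:ℚ) - 2*h) - 2)) := by ring_nf
          have erw2 : ((h:ℚ)+1)*(n.choose h : ℚ)
              / (((n:ℚ)-2*h)*(((n:ℚ)-2*h)^2-((n:ℚ)-2*h)+2*(h:ℚ)+2))
              = ((h:ℚ)+1)*(n.choose h : ℚ)/(((n:ℚ)-2*h)*(((n:ℚ)-2*h)^2-((n:ℚ)-2*h)+2*(h:ℚ)+2)) := rfl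
          calc _ ≤ _ := by exact_mod_cast hstep

lemma fid_eq (n h : ℕ) (hh : 2*h < n) :
    Fid n h = 1 - ((n:ℚ) - 2*h) * Tq n h / (n.choose h : ℚ) := by
  have hhn : h ≤ n := by omega
  have hC : (0:ℚ) < (n.choose h : ℚ) := by exact_mod_cast Nat.choose_pos hhn
  have hN : (0:ℚ) < (n:ℚ) - 2*h := by
    have : ((2*h : ℕ) : ℚ) < (n : ℚ) := by exact_mod_cast hh
    push_cast at this; linarith
  have hsum : ∑ k ∈ Finset.range (h+1),
      (ch n k - ch n ((k : ℤ) - 1)) * (((n : ℚ) - k - h) / ((n : ℚ) - 2 * k))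
      = (n.choose h : ℚ) - ((n:ℚ) - 2*h) * Tq n h := by
    have split : ∀ k : ℕ, (ch n k - ch n ((k : ℤ) - 1)) * (((n : ℚ) - k - h) / ((n : ℚ) - 2 * k))
        = ch n k * (((n : ℚ) - k - h) / ((n : ℚ) - 2 * k))
          - ch n ((k : ℤ) - 1) * (((n : ℚ) - k - h) / ((n : ℚ) - 2 * k)) := by
      intro k; ring
    rw [Finset.sum_congr rfl (fun k _ => split k), Finset.sum_sub_distrib]
    rw [Finset.sum_range_succ (fun k : ℕ => ch n k * (((n : ℚ) - k - h) / ((n : ℚ) - 2 * k)))]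
    rw [Finset.sum_range_succ' (fun k : ℕ => ch n ((k : ℤ) - 1) * (((n : ℚ) - k - h) / ((n : ℚ) - 2 * k)))]
    have h0 : ch n (((0:ℕ) : ℤ) - 1) * (((n : ℚ) - (0:ℕ) - h) / ((n : ℚ) - 2 * (0:ℕ))) = 0 := by
      norm_num [ch]
    have hlast : ch n (h : ℤ) * (((n : ℚ) - h - h) / ((n : ℚ) - 2 * h)) = (n.choose h : ℚ) := by
      rw [ch_natCast]
      have e : ((n : ℚ) - h - h) = ((n : ℚ) - 2 * h) := by ring
      rw [e, div_self hN.ne', mul_one]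
    have hterm : ∀ k ∈ Finset.range h,
        ch n k * (((n : ℚ) - k - h) / ((n : ℚ) - 2 * k))
          - ch n (((k+1:ℕ) : ℤ) - 1) * (((n : ℚ) - (k+1:ℕ) - h) / ((n : ℚ) - 2 * (k+1:ℕ)))
        = -(((n:ℚ) - 2*h) * ((n.choose k : ℚ) / (((n : ℚ) - 2 * k) * ((n : ℚ) - 2 * k - 2)))) := by
      intro k hk
      rw [Finset.mem_range] at hk
      have hk1 : (0:ℚ) < (n:ℚ) - 2*k - 2 := by
        have : ((2*k + 2 : ℕ) : ℚ) < (n : ℚ) := by exact_mod_cast (by omega : 2*k+2 < n)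
        push_cast at this; linarith
      have hk0 : (0:ℚ) < (n:ℚ) - 2*k := by linarith
      have hshiftk : ch n (((k+1:ℕ) : ℤ) - 1) = (n.choose k : ℚ) := by
        have e : (((k+1:ℕ) : ℤ) - 1) = (k : ℤ) := by push_cast; ring
        rw [e, ch_natCast]
      rw [hshiftk, ch_natCast]
      push_cast
      have e2 : ((n:ℚ) - 2 * ((k:ℚ) + 1)) = ((n:ℚ) - 2*(k:ℚ) - 2) := by ring
      rw [e2]
      rw [mul_div_assoc', mul_div_assoc', div_sub_div _ _ hk0.ne' hk1.ne', mul_div_assoc', ← neg_div,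
        div_eq_div_iff (mul_ne_zero hk0.ne' hk1.ne') (mul_ne_zero hk0.ne' hk1.ne')]
      ring
    have hsum2 : ∑ k ∈ Finset.range h,
        (ch n k * (((n : ℚ) - k - h) / ((n : ℚ) - 2 * k))
          - ch n (((k+1:ℕ) : ℤ) - 1) * (((n : ℚ) - (k+1:ℕ) - h) / ((n : ℚ) - 2 * (k+1:ℕ))))
        = -(((n:ℚ) - 2*h) * Tq n h) := by
      rw [Finset.sum_congr rfl hterm]
      rw [Finset.sum_neg_distrib, ← Finset.mul_sum]
      rfl
    rw [Finset.sum_sub_distrib] at hsum2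
    rw [h0, hlast, add_zero]
    linarith [hsum2]
  unfold Fid
  have hdivsplit : ∀ k : ℕ, ((ch n k - ch n ((k : ℤ) - 1)) / (n.choose h : ℚ))
      * (((n : ℚ) - k - h) / ((n : ℚ) - 2 * k))
      = ((ch n k - ch n ((k : ℤ) - 1)) * (((n : ℚ) - k - h) / ((n : ℚ) - 2 * k))) / (n.choose h : ℚ) := by
    intro k; ring
  rw [Finset.sum_congr rfl (fun k _ => hdivsplit k), ← Finset.sum_div, hsum]
  field_simp

lemma fid_succ_lt (n h : ℕ) (hh : 2*(h+1) < n) : Fid n (h+1) < Fid n h := by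
  have hh0 : 2*h < n := by omega
  have hhn : h ≤ n := by omega
  have hh1n : h+1 ≤ n := by omega
  have hC : (0:ℚ) < (n.choose h : ℚ) := by exact_mod_cast Nat.choose_pos hhn
  have hC' : (0:ℚ) < (n.choose (h+1) : ℚ) := by exact_mod_cast Nat.choose_pos hh1n
  have hN2 : (2:ℚ) < (n:ℚ) - 2*h := by
    have h3 : ((2*h+3 : ℕ):ℚ) ≤ ((n:ℕ):ℚ) := by exact_mod_cast (by omega : 2*h+3 ≤ n)
    push_cast at h3; linarith
  have hx : (0:ℚ) ≤ (h:ℚ) := by positivity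
  have hA : (0:ℚ) < ((n:ℚ)-2*h)^2 - ((n:ℚ)-2*h) + 2*h + 2 := by nlinarith
  have hnh : (0:ℚ) < (n:ℚ) - h := by linarith
  have hT := T_lt_U n h (by omega)
  have hchoose : (n.choose (h+1) : ℚ) * ((h:ℚ) + 1) = (n.choose h : ℚ) * ((n:ℚ) - h) := by
    have hnat := Nat.choose_succ_right_eq n h
    have hcast := congrArg (fun t : ℕ => (t : ℚ)) hnat
    push_cast [Nat.cast_sub hhn] at hcast
    linear_combination hcast
  have hchoosev : (n.choose (h+1) : ℚ) = (n.choose h : ℚ) * ((n:ℚ) - h) / ((h:ℚ)+1) := by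
    rw [eq_div_iff (by positivity : ((h:ℚ)+1) ≠ 0)]; exact hchoose
  have hTsucc : Tq n (h+1) = Tq n h + (n.choose h : ℚ) / (((n:ℚ) - 2*h) * ((n:ℚ) - 2*h - 2)) := by
    unfold Tq; rw [Finset.sum_range_succ]
  have d1 : ((n:ℚ) - 2*h) ≠ 0 := by linarith
  have d2 : ((n:ℚ) - 2*h - 2) ≠ 0 := by linarith
  have hdiff : Fid n h - Fid n (h+1)
      = (Ufun n h - Tq n h) *
        ((((n:ℚ)-2*h)^2 - ((n:ℚ)-2*h) + 2*h + 2) / ((n.choose h : ℚ) * ((n:ℚ) - h))) := by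
    rw [fid_eq n h hh0, fid_eq n (h+1) hh]
    rw [hTsucc, hchoosev]
    unfold Ufun
    push_cast
    have e3 : ((n:ℚ) - 2*((h:ℚ)+1)) = ((n:ℚ) - 2*(h:ℚ) - 2) := by ring
    rw [e3]
    generalize hAd : ((n:ℚ)-2*h)^2 - ((n:ℚ)-2*h) + 2*h + 2 = A at *
    have hA' := hA.ne'
    have := hnh.ne'
    have := hC.ne'
    have : (h:ℚ) + 1 ≠ 0 := by positivity
    field_simp
    rw [← hAd]
    ring
  have hpos : 0 < Fid n h - Fid n (h+1) := by
    rw [hdiff]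
    exact mul_pos (by linarith) (div_pos hA (mul_pos hC hnh))
  linarith

lemma fid_lt_of_lt (n : ℕ) : ∀ h₂ h₁ : ℕ, h₁ < h₂ → 2*h₂ < n → Fid n h₂ < Fid n h₁ := by
  intro h₂
  induction h₂ with
  | zero => intro h₁ h _; exact absurd h (Nat.not_lt_zero h₁)
  | succ k IH =>
    intro h₁ hlt hn2
    rcases Nat.lt_succ_iff_lt_or_eq.mp hlt with h | h
    · exact lt_trans (fid_succ_lt n k hn2) (IH h₁ h (by omega))
    · subst h; exact fid_succ_lt n h₁ hn2

/-- For odd `n ≥ 3`, the majority-vote fidelity `F_n(h)` is strictly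
decreasing in `h` on `{0, 1, …, (n-1)/2}`. -/
theorem fid_strict_anti (n : ℕ) (hn : Odd n) (hn3 : 3 ≤ n) :
    ∀ h₁ h₂ : ℕ, h₁ < h₂ → h₂ ≤ (n - 1) / 2 → Fid n h₂ < Fid n h₁ := by
  intro h₁ h₂ hlt hle
  obtain ⟨m, hm⟩ := hn
  exact fid_lt_of_lt n h₂ h₁ hlt (by omega)
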